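/- Let $n \ge 2$, $1 \le k \le n-1$, and $a \in \mathbb{R}^n$ with all $a_i > 0$ and $\sigma_k(a) = 1$. Define $h_k(a) = \max_{1\le i \le n} a_i\, \sigma_{k-1;i}(a)$. Then $\frac{k}{n} \le h_k(a) < 1$, and equality $h_k(a) = \frac{k}{n}$ holds if and only if $a_1 = a_2 = \cdots = a_n = \binom{n}{k}^{-1/k}$. -/

import Mathlib

open Finset

/-- The `k`-th elementary symmetric function of the variables `a i` for `i ∈ s`. -/
noncomputable def esym {n : ℕ} (s : Finset (Fin n)) (k : ℕ) (a : Fin n → ℝ) : ℝ :=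
  ∑ T ∈ s.powersetCard k, ∏ i ∈ T, a i


lemma esym_zero {n : ℕ} (s : Finset (Fin n)) (a : Fin n → ℝ) : esym s 0 a = 1 := by
  simp [esym]

lemma esym_pos {n : ℕ} {a : Fin n → ℝ} (hpos : ∀ i, 0 < a i) (s : Finset (Fin n)) (k : ℕ)
    (hk : k ≤ s.card) : 0 < esym s k a := by
  apply Finset.sum_pos
  · exact fun T _ => Finset.prod_pos fun i _ => hpos i
  · obtain ⟨T, hT, hc⟩ := Finset.exists_subset_card_eq hk
    exact ⟨T, Finset.mem_powersetCard.mpr ⟨hT, hc⟩⟩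

lemma esym_erase {n : ℕ} (a : Fin n → ℝ) {s : Finset (Fin n)} {i : Fin n} (hi : i ∈ s) (k : ℕ) :
    esym s (k+1) a = esym (s.erase i) (k+1) a + a i * esym (s.erase i) k a := by
  unfold esym
  conv_lhs => rw [← Finset.insert_erase hi]
  rw [Finset.powersetCard_succ_insert (Finset.notMem_erase i s), Finset.sum_union, Finset.sum_image, mul_sum]
  · congr 1
    refine Finset.sum_congr rfl fun T hT => ?_
    have hiT : i ∉ T := fun h =>
      Finset.notMem_erase i s ((Finset.mem_powersetCard.mp hT).1 h)
    rw [Finset.prod_insert hiT]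
  · intro T hT T' hT' h
    have hiT : i ∉ T := fun h =>
      Finset.notMem_erase i s ((Finset.mem_powersetCard.mp hT).1 h)
    have hiT' : i ∉ T' := fun h =>
      Finset.notMem_erase i s ((Finset.mem_powersetCard.mp hT').1 h)
    rw [← Finset.erase_insert hiT, ← Finset.erase_insert hiT', h]
  · rw [Finset.disjoint_left]
    intro T hT hT2
    obtain ⟨T', hT3, rfl⟩ := Finset.mem_image.mp hT2
    exact Finset.notMem_erase i s ((Finset.mem_powersetCard.mp hT).1 (Finset.mem_insert_self i T'))

lemma sum_b {n m : ℕ} (a : Fin n → ℝ) :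
    ∑ i : Fin n, a i * esym (univ.erase i) m a = (m+1 : ℝ) * esym univ (m+1) a := by
  unfold esym
  have RHS : ((m:ℝ)+1) * ∑ S ∈ Finset.univ.powersetCard (m+1), ∏ j ∈ S, a j
      = ∑ S ∈ Finset.univ.powersetCard (m+1), ∑ _i ∈ S, ∏ j ∈ S, a j := by
    rw [Finset.mul_sum]
    refine Finset.sum_congr rfl fun S hS => ?_
    rw [Finset.sum_const, nsmul_eq_mul, (Finset.mem_powersetCard.mp hS).2]
    push_cast; ring
  rw [RHS]
  simp_rw [Finset.mul_sum]
  rw [Finset.sum_sigma', Finset.sum_sigma']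
  refine Finset.sum_nbij' (fun p => ⟨insert p.1 p.2, p.1⟩) (fun p => ⟨p.2, p.1.erase p.2⟩)
    ?_ ?_ ?_ ?_ ?_
  · rintro ⟨i, T⟩ hp
    simp only [Finset.mem_sigma, Finset.mem_univ, true_and] at hp ⊢
    obtain ⟨hsub, hcard⟩ := Finset.mem_powersetCard.mp hp
    have hiT : i ∉ T := fun h => Finset.notMem_erase i _ (hsub h)
    refine ⟨Finset.mem_powersetCard.mpr ⟨Finset.subset_univ _, ?_⟩, Finset.mem_insert_self _ _⟩
    rw [Finset.card_insert_of_notMem hiT, hcard]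
  · rintro ⟨S, i⟩ hp
    simp only [Finset.mem_sigma, Finset.mem_univ, true_and] at hp ⊢
    obtain ⟨hS, hi⟩ := hp
    obtain ⟨-, hcard⟩ := Finset.mem_powersetCard.mp hS
    refine Finset.mem_powersetCard.mpr ⟨?_, ?_⟩
    · intro x hx
      exact Finset.mem_erase.mpr ⟨(Finset.mem_erase.mp hx).1, Finset.mem_univ x⟩
    · rw [Finset.card_erase_of_mem hi, hcard]; omega
  · rintro ⟨i, T⟩ hp
    simp only [Finset.mem_sigma, Finset.mem_univ, true_and] at hp
    have hiT : i ∉ T := fun h =>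
      Finset.notMem_erase i _ ((Finset.mem_powersetCard.mp hp).1 h)
    simp [Finset.erase_insert hiT]
  · rintro ⟨S, i⟩ hp
    simp only [Finset.mem_sigma, Finset.mem_univ, true_and] at hp
    simp [Finset.insert_erase hp.2]
  · rintro ⟨i, T⟩ hp
    simp only [Finset.mem_sigma, Finset.mem_univ, true_and] at hp
    have hiT : i ∉ T := fun h =>
      Finset.notMem_erase i _ ((Finset.mem_powersetCard.mp hp).1 h)
    exact (Finset.prod_insert hiT).symm

lemma b_sub {n k : ℕ} (a : Fin n → ℝ) {i j : Fin n} (hij : i ≠ j) :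
    a i * esym (univ.erase i) k a - a j * esym (univ.erase j) k a
      = (a i - a j) * esym ((univ.erase i).erase j) k a := by
  rcases k with _ | m
  · simp [esym_zero]
  · have hji : j ∈ (univ : Finset (Fin n)).erase i :=
      Finset.mem_erase.mpr ⟨hij.symm, Finset.mem_univ j⟩
    have hijm : i ∈ (univ : Finset (Fin n)).erase j :=
      Finset.mem_erase.mpr ⟨hij, Finset.mem_univ i⟩
    rw [esym_erase a hji m, esym_erase a hijm m,
      Finset.erase_right_comm (a := j) (b := i)]
    ring


/-- With h_k(a) = max_i a_i σ_{k-1;i}(a): k/n ≤ h_k(a) < 1, with equality h_k(a) = k/n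
iff all a_i equal the constant (n choose k)^{-1/k}. -/
theorem stmt_6 (n k : ℕ) (hn : 2 ≤ n) (hk : 1 ≤ k) (hkn : k ≤ n - 1)
    (a : Fin n → ℝ) (hpos : ∀ i, 0 < a i) (hsk : esym Finset.univ k a = 1) :
    let h := Finset.univ.sup'
      (Finset.univ_nonempty_iff.mpr (Fin.pos_iff_nonempty.mp (by omega)))
      (fun i => a i * esym (Finset.univ.erase i) (k - 1) a)
    (k : ℝ) / n ≤ h ∧ h < 1 ∧
      (h = (k : ℝ) / n ↔ ∀ i, a i = ((n.choose k : ℝ)) ^ (-(1 : ℝ) / k)) := by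
  obtain ⟨m, rfl⟩ : ∃ m, k = m + 1 := ⟨k - 1, by omega⟩
  intro h
  have hne : (univ : Finset (Fin n)).Nonempty :=
    Finset.univ_nonempty_iff.mpr (Fin.pos_iff_nonempty.mp (by omega))
  have npos : (0 : ℝ) < n := by positivity
  set b : Fin n → ℝ := fun i => a i * esym (Finset.univ.erase i) (m + 1 - 1) a with hbdef
  have hb : ∀ i, b i = a i * esym (univ.erase i) m a := fun i => rfl
  have hh : h = univ.sup' hne b := rfl
  have i₀ : Fin n := ⟨0, by omega⟩
  have hsum : ∑ i, b i = (m + 1 : ℝ) := by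
    simp only [hb]
    rw [sum_b a, hsk, mul_one]
  have le_h : ∀ i, b i ≤ h := fun i => by
    rw [hh]; exact Finset.le_sup' b (Finset.mem_univ i)
  have hE : ∀ {i j : Fin n}, i ≠ j → 0 < esym ((univ.erase i).erase j) m a := by
    intro i j hij
    apply esym_pos hpos
    rw [Finset.card_erase_of_mem (Finset.mem_erase.mpr ⟨hij.symm, Finset.mem_univ j⟩),
      Finset.card_erase_of_mem (Finset.mem_univ i), Finset.card_univ, Fintype.card_fin]
    omega
  -- lower bound
  have hle : ((m : ℝ) + 1) / n ≤ h := by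
    rw [div_le_iff₀ npos]
    have hs : ∑ i, b i ≤ ∑ _i : Fin n, h := Finset.sum_le_sum fun i _ => le_h i
    rw [hsum, Finset.sum_const, Finset.card_univ, Fintype.card_fin, nsmul_eq_mul] at hs
    linarith
  have hle' : ((m + 1 : ℕ) : ℝ) / n ≤ h := by push_cast; exact hle
  refine ⟨hle', ?_, ?_⟩
  -- upper bound
  · rw [hh, Finset.sup'_lt_iff]
    intro i _
    have hsplit := esym_erase a (Finset.mem_univ i) m
    have hpos2 : 0 < esym (univ.erase i) (m + 1) a := by
      apply esym_pos hpos
      rw [Finset.card_erase_of_mem (Finset.mem_univ i), Finset.card_univ, Fintype.card_fin]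
      omega
    rw [hsk] at hsplit
    rw [hb]
    linarith
  -- equality case
  · constructor
    · intro heq
      have key : ∀ i, b i = h := by
        have h0 : ∑ i : Fin n, (h - b i) = 0 := by
          rw [Finset.sum_sub_distrib, hsum, Finset.sum_const, Finset.card_univ,
            Fintype.card_fin, nsmul_eq_mul, heq]
          push_cast
          field_simp
          ring
        intro i
        have h1 := (Finset.sum_eq_zero_iff_of_nonneg
          (fun i _ => sub_nonneg.mpr (le_h i))).mp h0 i (Finset.mem_univ i)
        linarith
      have haeq : ∀ i j, a i = a j := by
        intro i j
        rcases eq_or_ne i j with rfl | hij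
        · rfl
        · have h2 : b i - b j = (a i - a j) * esym ((univ.erase i).erase j) m a := b_sub a hij
          rw [key i, key j, sub_self] at h2
          rcases mul_eq_zero.mp h2.symm with h3 | h3
          · linarith
          · exact absurd h3 (ne_of_gt (hE hij))
      intro i
      set c : ℝ := a i with hc
      have hCnat : 0 < n.choose (m + 1) := Nat.choose_pos (by omega)
      have hCpos : (0 : ℝ) < (n.choose (m + 1) : ℝ) := by exact_mod_cast hCnat
      have hck : (n.choose (m + 1) : ℝ) * c ^ (m + 1) = 1 := by
        rw [← hsk]
        unfold esym
        rw [Finset.sum_congr rfl (fun T hT => by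
          rw [Finset.prod_congr rfl (fun j _ => haeq j i), Finset.prod_const,
            (Finset.mem_powersetCard.mp hT).2])]
        rw [Finset.sum_const, Finset.card_powersetCard, Finset.card_univ, Fintype.card_fin,
          nsmul_eq_mul]
      have hcpos : 0 < c := hpos i
      have hpow : c ^ ((m + 1 : ℕ) : ℝ) = ((n.choose (m + 1) : ℝ))⁻¹ := by
        rw [Real.rpow_natCast]
        field_simp
        linarith [hck]
      have hmne : ((m + 1 : ℕ) : ℝ) ≠ 0 := by positivity
      calc c = (c ^ ((m + 1 : ℕ) : ℝ)) ^ (((m + 1 : ℕ) : ℝ))⁻¹ := by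
              rw [← Real.rpow_mul hcpos.le, mul_inv_cancel₀ hmne, Real.rpow_one]
        _ = ((n.choose (m + 1) : ℝ))⁻¹ ^ (((m + 1 : ℕ) : ℝ))⁻¹ := by rw [hpow]
        _ = ((n.choose (m + 1) : ℝ)) ^ (-(1 : ℝ) / ((m + 1 : ℕ) : ℝ)) := by
              rw [← Real.rpow_neg_one (n.choose (m + 1) : ℝ), ← Real.rpow_mul hCpos.le,
                neg_one_mul, neg_div, one_div]
    · intro ha
      have haeq : ∀ i j, a i = a j := fun i j => by rw [ha i, ha j]
      have hbeq : ∀ i j, b i = b j := by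
        intro i j
        rcases eq_or_ne i j with rfl | hij
        · rfl
        · have h2 : b i - b j = (a i - a j) * esym ((univ.erase i).erase j) m a := b_sub a hij
          rw [haeq i j, sub_self, zero_mul] at h2
          linarith
      obtain ⟨j₀, hj₀⟩ := hne
      have hbv : b j₀ = ((m : ℝ) + 1) / n := by
        have : ∑ i : Fin n, b i = n * b j₀ := by
          rw [Finset.sum_congr rfl (fun i _ => hbeq i j₀), Finset.sum_const, Finset.card_univ,
            Fintype.card_fin, nsmul_eq_mul]
        rw [this] at hsum
        field_simp
        linarith [hsum, mul_comm ((n:ℕ):ℝ) (b j₀)]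
      apply le_antisymm _ hle'
      rw [hh]
      apply Finset.sup'_le
      intro i _
      rw [hbeq i j₀, hbv]
      push_cast
      exact le_rfl
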